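/- Let h be a multisegment, c an integer, and m₁ a nonempty multisegment at the point c. Let m₂ be obtained from m₁ by replacing one segment [c,b₀] of m₁ with a longer segment [c,b], b > b₀. Suppose both m₁ and m₂ are admissible to h. Then fs(m₁,h) ≤ᵃ_c fs(m₂,h). -/

import Mathlib

noncomputable section
open Classical

/-- A segment `[a,b]`: a pair of integers with `a ≤ b`, identified with the
integer interval `{a, a+1, …, b}`. -/
def Seg : Type := {p : ℤ × ℤ // p.1 ≤ p.2}

/-- Constructor for segments. -/
def Seg.mk (a b : ℤ) (hab : a ≤ b) : Seg := Subtype.mk (a, b) hab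

instance : DecidableEq Seg := inferInstanceAs (DecidableEq {p : ℤ × ℤ // p.1 ≤ p.2})

instance : Inhabited Seg := ⟨Seg.mk 0 0 le_rfl⟩

/-- The lexicographic ordering `≼ᴸ` on segments: `[a,b] ≤ [a',b']` iff `a < a'`,
or `a = a'` and `b ≤ b'`. -/
instance : LinearOrder Seg :=
  LinearOrder.lift' (fun Δ => toLex (Subtype.val Δ))
    (fun _ _ hh => Subtype.ext (toLex.injective hh))

/-- `a(Δ)`, the left endpoint. -/
def segA (Δ : Seg) : ℤ := (Subtype.val Δ).1

/-- `b(Δ)`, the right endpoint. -/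
def segB (Δ : Seg) : ℤ := (Subtype.val Δ).2

/-- `[a,b]` as a multiset of segments: a singleton if `a ≤ b`, empty otherwise
("empty segments are discarded"). -/
def mkSeg? (a b : ℤ) : Multiset Seg := if h : a ≤ b then {Seg.mk a b h} else 0

/-- `⁻Δ = [a+1,b]`, as a multiset (the empty segment being discarded). -/
def negSeg (Δ : Seg) : Multiset Seg := mkSeg? (segA Δ + 1) (segB Δ)

/-- `⁻m` for a multisegment `m`. -/
def negM (m : Multiset Seg) : Multiset Seg := m.bind negSeg

/-- `m[c]`: the submultiset of segments of `m` starting at `c`. -/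
def atc (m : Multiset Seg) (c : ℤ) : Multiset Seg := m.filter (fun Δ => segA Δ = c)

/-- `Δ ⊆ Δ'` as intervals. -/
def Subseg (Δ Δ' : Seg) : Prop := segA Δ' ≤ segA Δ ∧ segB Δ ≤ segB Δ'

/-- Two segments are linked: their union is an interval and neither contains
the other. -/
def Linked (Δ Δ' : Seg) : Prop :=
  segA Δ ≤ segB Δ' + 1 ∧ segA Δ' ≤ segB Δ + 1 ∧ ¬ Subseg Δ Δ' ∧ ¬ Subseg Δ' Δ

/-- `Δ = [a,b]` is admissible to `h`: `h` contains a segment `[a,c]` with `c ≥ b`. -/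
def SegAdmissible (Δ : Seg) (h : Multiset Seg) : Prop :=
  ∃ D ∈ h, segA D = segA Δ ∧ segB Δ ≤ segB D

/-- The tail of the removal sequence: recursively pick the `≺ᴸ`-minimal segment
`[aᵢ,bᵢ]` of `h` with `a_{i-1} < aᵢ` and `b ≤ bᵢ < b_{i-1}`. -/
def removalTail (h : Multiset Seg) (b : ℤ) : ℕ → ℤ → ℤ → List Seg
  | 0, _, _ => []
  | fuel + 1, aprev, bprev =>
    if hx : ∃ D, (D ∈ h ∧ aprev < segA D ∧ b ≤ segB D ∧ segB D < bprev) ∧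
        ∀ D', (D' ∈ h ∧ aprev < segA D' ∧ b ≤ segB D' ∧ segB D' < bprev) → D ≤ D' then
      Classical.choose hx ::
        removalTail h b fuel (segA (Classical.choose hx)) (segB (Classical.choose hx))
    else []

/-- The removal sequence for `(Δ, h)`: `Δ₁` is a shortest segment `[a,c]` of `h`
with `c ≥ b`, followed by the recursively chosen segments. (Empty if `Δ` is not
admissible to `h`.) -/
def removalSeq (Δ : Seg) (h : Multiset Seg) : List Seg :=
  if hx : ∃ D, (D ∈ h ∧ segA D = segA Δ ∧ segB Δ ≤ segB D) ∧
      ∀ D', (D' ∈ h ∧ segA D' = segA Δ ∧ segB Δ ≤ segB D') → segB D ≤ segB D' then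
    Classical.choose hx ::
      removalTail h (segB Δ) (segB (Classical.choose hx) - segB Δ).toNat
        (segA (Classical.choose hx)) (segB (Classical.choose hx))
  else []

/-- `Υ(Δ,h)`: the first segment of the removal sequence for `(Δ,h)`. -/
def Upsilon (Δ : Seg) (h : Multiset Seg) : Seg := (removalSeq Δ h).headD default

/-- The truncations `Δ₁ᵗʳ, …, Δᵣᵗʳ` of a removal sequence:
`Δᵢᵗʳ = [a_{i+1}, bᵢ]` for `i < r` and `Δᵣᵗʳ = [b+1, bᵣ]` (possibly empty). -/
def truncList (b : ℤ) : List Seg → Multiset Seg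
  | [] => 0
  | [D] => mkSeg? (b + 1) (segB D)
  | D :: D' :: rest => mkSeg? (segA D') (segB D) + truncList b (D' :: rest)

/-- `r(Δ,h) = h − Δ₁ − … − Δᵣ + Δ₁ᵗʳ + … + Δᵣᵗʳ`, with `none` playing the role
of the infinity multisegment `∞`. -/
def segRemove (Δ : Seg) (h : Multiset Seg) : Option (Multiset Seg) :=
  if SegAdmissible Δ h then
    some (h - (removalSeq Δ h : Multiset Seg) + truncList (segB Δ) (removalSeq Δ h))
  else none

/-- Iterated removal along a list of segments (also `r(Δ,∞) = ∞`). -/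
def rList : List Seg → Option (Multiset Seg) → Option (Multiset Seg)
  | [], o => o
  | Δ :: rest, o => rList rest (o.bind (fun x => segRemove Δ x))

/-- `r(m,h)` for a multisegment `m`: apply the removals along the segments of
`m` listed in an ascending (here: `≺ᴸ`-sorted) order. -/
def rM (m h : Multiset Seg) : Option (Multiset Seg) :=
  rList (m.sort (· ≤ ·)) (some h)

/-- The smallest integer `a` with `n[a] ≠ ∅` (junk value `0` for `n = ∅`). -/
def minStart (n : Multiset Seg) : ℤ := ((n.map segA).sort (· ≤ ·)).headD 0

/-- `Υ(Δ₁,r₀), Υ(Δ₂,r₁), …` computed sequentially along a list of segments. -/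
def fsList : List Seg → Multiset Seg → Multiset Seg
  | [], _ => 0
  | Δ :: rest, h =>
    Upsilon Δ h ::ₘ
      (match segRemove Δ h with
        | some h' => fsList rest h'
        | none => 0)

/-- `fs(n,h)`: with `a` the smallest integer such that `n[a] ≠ ∅` and
`n[a] = {Δ₁, …, Δₖ}`, this is `{Υ(Δ₁,r₀), …, Υ(Δₖ,r_{k-1})}` if `n[a]` is
admissible to `h`, and `∅` otherwise (also `fs(∅,h) = ∅`). -/
def fs (n h : Multiset Seg) : Multiset Seg :=
  if n = 0 then 0
  else if rM (atc n (minStart n)) h ≠ none then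
    fsList ((atc n (minStart n)).sort (· ≤ ·)) h
  else 0

/-- `trr(n,h) = h − fs(n,h) + ⁻(fs(n,h))`. -/
def trr (n h : Multiset Seg) : Multiset Seg := h - fs n h + negM (fs n h)

/-- `trd(n,h) = n − n[a] + ⁻(n[a])` where `a` is the smallest integer with
`n[a] ≠ ∅` (and `trd(∅,h) = ∅`). -/
def trd (n h : Multiset Seg) : Multiset Seg :=
  if n = 0 then 0 else n - atc n (minStart n) + negM (atc n (minStart n))

/-- The pairs `(nᵢ, hᵢ)` of the fine chain: `n₀ = n`, `h₀ = h`,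
`nᵢ = trd(n_{i-1}, h_{i-1})`, `hᵢ = trr(n_{i-1}, h_{i-1})`. -/
def fcPair (n h : Multiset Seg) : ℕ → Multiset Seg × Multiset Seg
  | 0 => (n, h)
  | i + 1 => (trd (fcPair n h i).1 (fcPair n h i).2, trr (fcPair n h i).1 (fcPair n h i).2)

/-- The fine chain `fc_h(n)`: the sequence `fs(n₀,h₀), fs(n₁,h₁), …`. -/
def fc (h n : Multiset Seg) (i : ℕ) : Multiset Seg := fs (fcPair n h i).1 (fcPair n h i).2

/-- `n` is obtained from `m` by an elementary intersection-union operation: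
`n = m − Δ − Δ' + (Δ ∪ Δ') + (Δ ∩ Δ')` for a pair of linked segments `Δ, Δ'`
of `m` (intersection omitted if empty). -/
def elemIU (m n : Multiset Seg) : Prop :=
  ∃ Δ Δ', Δ ∈ m ∧ Δ' ∈ m.erase Δ ∧ Linked Δ Δ' ∧
    n = (m.erase Δ).erase Δ'
        + mkSeg? (min (segA Δ) (segA Δ')) (max (segB Δ) (segB Δ'))
        + mkSeg? (max (segA Δ) (segA Δ')) (min (segB Δ) (segB Δ'))

/-- The Zelevinsky ordering: `n ≤_Z m` iff `n = m` or `n` is obtained from `m`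
by a finite sequence of elementary intersection-union operations. -/
def leZ (n m : Multiset Seg) : Prop := Relation.ReflTransGen elemIU m n

/-- The cuspidal support of a multisegment: the multiset union of its segments,
as a multiset of integers. -/
def csupp (m : Multiset Seg) : Multiset ℤ :=
  m.bind (fun Δ => (Finset.Icc (segA Δ) (segB Δ)).val)

/-- The `b`-values of a multisegment, sorted in descending order. -/
def bDesc (m : Multiset Seg) : List ℤ := ((m.map segB).sort (· ≤ ·)).reverse

/-- `m₁ ≤ᵃ_c m₂` for multisegments at a point `c`: with segments labelled
`Δ_{1,k} ≤ᵃ_c … ≤ᵃ_c Δ_{1,1}` and `Δ_{2,r} ≤ᵃ_c … ≤ᵃ_c Δ_{2,1}`, require `k ≤ r`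
and `Δ_{1,i} ≤ᵃ_c Δ_{2,i}` for all `i ≤ k`. -/
def leA (m₁ m₂ : Multiset Seg) : Prop :=
  (bDesc m₁).length ≤ (bDesc m₂).length ∧
    ∀ i < (bDesc m₁).length, (bDesc m₁).getD i 0 ≤ (bDesc m₂).getD i 0

/-- `m₁ <ᵃ_c m₂`. -/
def ltA (m₁ m₂ : Multiset Seg) : Prop := leA m₁ m₂ ∧ m₁ ≠ m₂

/-- The fine chain ordering `n <^{fc} n'` (with respect to `h`). -/
def ltFC (h n n' : Multiset Seg) : Prop :=
  ∃ i, (∀ j < i, fc h n j = fc h n' j) ∧ ltA (fc h n i) (fc h n' i)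

/-- `n ≤^{fc} n'`: either `n <^{fc} n'` or the two fine chains are equal. -/
def leFC (h n n' : Multiset Seg) : Prop := ltFC h n n' ∨ ∀ i, fc h n i = fc h n' i

/-- Local minimizability of `(n,h)`: with `a` the smallest integer such that
`n[a] ≠ ∅`, there is a segment `Δ̄` in `n[a+1]` with
`|{Δ ∈ n[a] : Δ̄ ⊆ Δ}| < |{Δ ∈ fs(n,h) : Δ̄ ⊆ Δ}|`. -/
def locallyMin (n h : Multiset Seg) : Prop :=
  ∃ Δb ∈ atc n (minStart n + 1),
    ((atc n (minStart n)).filter (fun Δ => Subseg Δb Δ)).card <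
      ((fs n h).filter (fun Δ => Subseg Δb Δ)).card

/-- The shortest segment of the removal sequence for `(Δ,h)` whose interval
contains `x` (by the nesting property, the last such one in the sequence). -/
def shortestCont (Δ : Seg) (h : Multiset Seg) (x : ℤ) : Seg :=
  (((removalSeq Δ h).filter (fun D => decide (segA D ≤ x ∧ x ≤ segB D))).getLast?).getD default

/-- The non-overlapping property for `(Δ, Δ', h)`: for the shortest segment `Δ̄`
in the removal sequence for `(Δ,h)` containing `a(Δ') − 1`, one has `Δ' ⊄ Δ̄`. -/
def NonOverlap (Δ Δ' : Seg) (h : Multiset Seg) : Prop :=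
  ¬ Subseg Δ' (shortestCont Δ h (segA Δ' - 1))

/-- `ε_Δ(h) = |{Δ̃ ∈ h[a(Δ)] : Δ ⊆ Δ̃}|`, counted with multiplicity. -/
def epsilonSeg (Δ : Seg) (h : Multiset Seg) : ℕ :=
  ((atc h (segA Δ)).filter (fun D => Subseg Δ D)).card

/-- `η_{Δ'}(h) = η_{Δ'}(h')`: componentwise equality of
`(ε_{[a',b']}, ε_{[a'+1,b']}, …, ε_{[b',b']})`. -/
def etaEq (Δ' : Seg) (h h' : Multiset Seg) : Prop :=
  ∀ c, segA Δ' ≤ c → ∀ hc : c ≤ segB Δ',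
    epsilonSeg (Seg.mk c (segB Δ') hc) h = epsilonSeg (Seg.mk c (segB Δ') hc) h'

/-- The intermediate segment property for `(Δ, Δ', h)`. -/
def IntermediateSeg (Δ Δ' : Seg) (h : Multiset Seg) : Prop :=
  ∃ D ∈ h, segA Δ ≤ segA D ∧ segA D < segA Δ' ∧ segB Δ ≤ segB D ∧ segB D < segB Δ'

/-- Helper to build segments from literals. -/
def sg (a b : ℤ) (hab : a ≤ b := by decide) : Seg := Seg.mk a b hab


/-- minimal element of `s` that is `≥ t`, if any. -/
def gpick (t : ℤ) (s : Multiset ℤ) : Option ℤ :=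
  ((s.filter (fun x => t ≤ x)).sort (· ≤ ·)).head?

def greedy : List ℤ → Multiset ℤ → Option (List ℤ)
  | [], _ => some []
  | t :: ts, s => (gpick t s).bind fun β => (greedy ts (s.erase β)).map (β :: ·)

lemma count_erase' (s : Multiset ℤ) (a b : ℤ) :
    (s.erase b).count a = s.count a - (if a = b then 1 else 0) := by
  by_cases h : a = b
  · subst h; simp [Multiset.count_erase_self]
  · simp [Multiset.count_erase_of_ne h, h]

lemma gpick_spec {t : ℤ} {s : Multiset ℤ} {β : ℤ} (h : gpick t s = some β) :
    β ∈ s ∧ t ≤ β ∧ ∀ γ ∈ s, t ≤ γ → β ≤ γ := by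
  unfold gpick at h
  have hmem : ∀ x, x ∈ ((s.filter (fun x => t ≤ x)).sort (· ≤ ·)) ↔ (x ∈ s ∧ t ≤ x) := by
    intro x; rw [Multiset.mem_sort, Multiset.mem_filter]
  have hsorted : ((s.filter (fun x => t ≤ x)).sort (· ≤ ·)).Pairwise (· ≤ ·) :=
    Multiset.pairwise_sort _ _
  rcases hl : ((s.filter (fun x => t ≤ x)).sort (· ≤ ·)) with _ | ⟨a, l'⟩
  · rw [hl] at h; simp at h
  · rw [hl] at h hmem hsorted
    simp only [List.head?_cons, Option.some.injEq] at h
    have h1 := (hmem a).1 (by simp)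
    refine ⟨h ▸ h1.1, h ▸ h1.2, ?_⟩
    intro γ hγ htγ
    rcases List.mem_cons.1 ((hmem γ).2 ⟨hγ, htγ⟩) with rfl | hmem'
    · exact le_of_eq h.symm
    · exact h ▸ (List.pairwise_cons.1 hsorted).1 _ hmem'

lemma gpick_isSome {t γ : ℤ} {s : Multiset ℤ} (hγ : γ ∈ s) (htγ : t ≤ γ) :
    ∃ β, gpick t s = some β := by
  unfold gpick
  have hm : γ ∈ ((s.filter (fun x => t ≤ x)).sort (· ≤ ·)) := by
    rw [Multiset.mem_sort, Multiset.mem_filter]; exact ⟨hγ, htγ⟩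
  rcases hl : ((s.filter (fun x => t ≤ x)).sort (· ≤ ·)) with _ | ⟨a, l'⟩
  · rw [hl] at hm; simp at hm
  · exact ⟨a, rfl⟩

/-- uniqueness of the pick value. -/
lemma gpick_eq_of {t β : ℤ} {s : Multiset ℤ} (hβ : β ∈ s) (htβ : t ≤ β)
    (hmin : ∀ γ ∈ s, t ≤ γ → β ≤ γ) : gpick t s = some β := by
  obtain ⟨β', hβ'⟩ := gpick_isSome hβ htβ
  obtain ⟨h1, h2, h3⟩ := gpick_spec hβ'
  rw [hβ']
  congr 1
  exact le_antisymm (h3 β hβ htβ) (hmin β' h1 h2)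

lemma greedy_mem : ∀ {T : List ℤ} {s : Multiset ℤ} {P : List ℤ},
    greedy T s = some P → ∀ β ∈ P, β ∈ s := by
  intro T
  induction T with
  | nil => intro s P h β hβ; simp [greedy] at h; subst h; simp at hβ
  | cons t ts ih =>
    intro s P h β hβ
    simp only [greedy, Option.bind_eq_some_iff, Option.map_eq_some_iff] at h
    obtain ⟨p, hp, P', hP', rfl⟩ := h
    rcases List.mem_cons.1 hβ with rfl | hβ'
    · exact (gpick_spec hp).1
    · exact Multiset.mem_of_le (Multiset.erase_le _ _) (ih hP' β hβ')

lemma greedy_lb : ∀ {T : List ℤ} {s : Multiset ℤ} {P : List ℤ} {t : ℤ},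
    (∀ u ∈ T, t ≤ u) → greedy T s = some P → ∀ β ∈ P, t ≤ β := by
  intro T
  induction T with
  | nil => intro s P t _ h β hβ; simp [greedy] at h; subst h; simp at hβ
  | cons u ts ih =>
    intro s P t hT h β hβ
    simp only [greedy, Option.bind_eq_some_iff, Option.map_eq_some_iff] at h
    obtain ⟨p, hp, P', hP', rfl⟩ := h
    rcases List.mem_cons.1 hβ with rfl | hβ'
    · exact le_trans (hT u (by simp)) (gpick_spec hp).2.1
    · exact ih (fun v hv => hT v (by simp [hv])) hP' β hβ'

lemma greedy_length : ∀ {T : List ℤ} {s : Multiset ℤ} {P : List ℤ},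
    greedy T s = some P → P.length = T.length := by
  intro T
  induction T with
  | nil => intro s P h; simp [greedy] at h; subst h; rfl
  | cons t ts ih =>
    intro s P h
    simp only [greedy, Option.bind_eq_some_iff, Option.map_eq_some_iff] at h
    obtain ⟨p, hp, P', hP', rfl⟩ := h
    simp [ih hP']

lemma greedy_sorted : ∀ {T : List ℤ} {s : Multiset ℤ} {P : List ℤ},
    T.Pairwise (· ≤ ·) → greedy T s = some P → P.Pairwise (· ≤ ·) := by
  intro T
  induction T with
  | nil => intro s P _ h; simp [greedy] at h; subst h; simp
  | cons t ts ih =>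
    intro s P hT h
    simp only [greedy, Option.bind_eq_some_iff, Option.map_eq_some_iff] at h
    obtain ⟨p, hp, P', hP', rfl⟩ := h
    rw [List.pairwise_cons] at hT ⊢
    refine ⟨?_, ih hT.2 hP'⟩
    intro β hβ
    have hβs : β ∈ s := Multiset.mem_of_le (Multiset.erase_le _ _) (greedy_mem hP' β hβ)
    have hβt : t ≤ β := greedy_lb hT.1 hP' β hβ
    exact (gpick_spec hp).2.2 β hβs hβt

/-- The core comparison lemma. -/
lemma greedy_comparison : ∀ {T₁ : List ℤ} {T₂ : List ℤ} {B₁ B₂ : Multiset ℤ} {τ : ℤ}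
    {P₁ P₂ : List ℤ},
    List.Forall₂ (· ≤ ·) T₁ T₂ → T₂.Pairwise (· ≤ ·) → (∀ u ∈ T₂, τ ≤ u) →
    (∀ v, τ ≤ v → B₂.count v ≤ B₁.count v) →
    greedy T₁ B₁ = some P₁ → greedy T₂ B₂ = some P₂ →
    List.Forall₂ (· ≤ ·) P₁ P₂ := by
  intro T₁
  induction T₁ with
  | nil =>
    intro T₂ B₁ B₂ τ P₁ P₂ hF hs hτ hcnt h₁ h₂
    cases hF
    simp [greedy] at h₁ h₂; subst h₁; subst h₂; exact List.Forall₂.nil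
  | cons t ts ih =>
    intro T₂ B₁ B₂ τ P₁ P₂ hF hs hτ hcnt h₁ h₂
    rcases hF with _ | ⟨htt', hF'⟩
    rename_i t' ts'
    simp only [greedy, Option.bind_eq_some_iff, Option.map_eq_some_iff] at h₁ h₂
    obtain ⟨p, hp, P₁', hP₁', rfl⟩ := h₁
    obtain ⟨q, hq, P₂', hP₂', rfl⟩ := h₂
    obtain ⟨hqB₂, ht'q, hqmin⟩ := gpick_spec hq
    obtain ⟨hpB₁, htp, hpmin⟩ := gpick_spec hp
    have hτt' : τ ≤ t' := hτ t' (by simp)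
    have hqB₁ : q ∈ B₁ := by
      rw [← Multiset.count_pos]
      calc (0:ℕ) < B₂.count q := Multiset.count_pos.2 hqB₂
        _ ≤ B₁.count q := hcnt q (le_trans hτt' ht'q)
    have hpq : p ≤ q := hpmin q hqB₁ (le_trans htt' ht'q)
    refine List.Forall₂.cons hpq ?_
    refine ih (τ := t') hF' (List.pairwise_cons.1 hs).2
      (fun u hu => (List.pairwise_cons.1 hs).1 u hu) ?_ hP₁' hP₂'
    intro v hv
    rw [count_erase', count_erase']
    by_cases hvp : v = p
    · by_cases hvq : v = q
      · simp only [if_pos hvp, if_pos hvq]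
        exact Nat.sub_le_sub_right (hcnt _ (le_trans hτt' hv)) 1
      · have hcnt0 : B₂.count v = 0 := by
          by_contra hne
          have hvB₂ : v ∈ B₂ := Multiset.count_pos.1 (Nat.pos_of_ne_zero hne)
          have h1 : q ≤ v := hqmin v hvB₂ hv
          have h2 : v ≤ q := hvp ▸ hpq
          exact hvq (le_antisymm h2 h1)
        simp [hcnt0]
    · simp only [if_neg hvp]
      by_cases hvq : v = q
      · simp only [if_pos hvq]
        exact le_trans (Nat.sub_le _ _) (hcnt _ (le_trans hτt' hv))
      · simp only [if_neg hvq]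
        exact hcnt _ (le_trans hτt' hv)


lemma forall₂_cons_orderedInsert : ∀ {l : List ℤ} {a y : ℤ}, l.Pairwise (· ≤ ·) → a ≤ y →
    (∀ z ∈ l, a ≤ z) → List.Forall₂ (· ≤ ·) (a :: l) (List.orderedInsert (· ≤ ·) y l) := by
  intro l
  induction l with
  | nil => intro a y _ hay _; exact List.Forall₂.cons hay List.Forall₂.nil
  | cons b t ih =>
    intro a y hs hay hlb
    simp only [List.orderedInsert]
    split
    · exact List.Forall₂.cons hay (List.forall₂_same.2 (fun x _ => le_rfl))
    · rename_i hyb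
      push_neg at hyb
      refine List.Forall₂.cons (hlb b (by simp)) ?_
      exact ih (List.pairwise_cons.1 hs).2 (le_of_lt hyb) (fun z hz => (List.pairwise_cons.1 hs).1 z hz)

lemma forall₂_erase_insert : ∀ {l : List ℤ} {x y : ℤ}, l.Pairwise (· ≤ ·) → x ∈ l → x ≤ y →
    List.Forall₂ (· ≤ ·) l (List.orderedInsert (· ≤ ·) y (l.erase x)) := by
  intro l
  induction l with
  | nil => intro x y _ hx; simp at hx
  | cons a t ih =>
    intro x y hs hx hxy
    by_cases hxa : x = a
    · subst hxa
      rw [List.erase_cons_head]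
      exact forall₂_cons_orderedInsert (List.pairwise_cons.1 hs).2 hxy
        (fun z hz => (List.pairwise_cons.1 hs).1 z hz)
    · have hxt : x ∈ t := by
        rcases List.mem_cons.1 hx with h | h
        · exact absurd h hxa
        · exact h
      rw [List.erase_cons_tail (by simp [Ne.symm hxa])]
      simp only [List.orderedInsert]
      split
      · rename_i hya
        exfalso
        have hax : a ≤ x := (List.pairwise_cons.1 hs).1 x hxt
        exact hxa (le_antisymm (le_trans hxy hya) hax)
      · exact List.Forall₂.cons le_rfl (ih (List.pairwise_cons.1 hs).2 hxt hxy)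

theorem List.eq_of_perm_of_sorted {α : Type*} {r : α → α → Prop} [Std.Antisymm r]
    {l₁ l₂ : List α} (hp : l₁.Perm l₂) (h1 : l₁.Pairwise r) (h2 : l₂.Pairwise r) : l₁ = l₂ :=
  hp.eq_of_pairwise' h1 h2

lemma sort_replace (s : Multiset ℤ) (x y : ℤ) (hx : x ∈ s) (hxy : x ≤ y) :
    List.Forall₂ (· ≤ ·) (s.sort (· ≤ ·)) ((s.erase x + {y}).sort (· ≤ ·)) := by
  have hxl : x ∈ s.sort (· ≤ ·) := (Multiset.mem_sort _).2 hx
  have hkey : (s.erase x + {y}).sort (· ≤ ·) =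
      List.orderedInsert (· ≤ ·) y ((s.sort (· ≤ ·)).erase x) := by
    refine List.eq_of_perm_of_sorted (r := (· ≤ ·)) ?_ (Multiset.pairwise_sort _ _)
      (List.Pairwise.orderedInsert _ _ ((Multiset.pairwise_sort _ _).erase _))
    rw [← Multiset.coe_eq_coe, Multiset.sort_eq]
    have h1 : (List.orderedInsert (· ≤ ·) y ((s.sort (· ≤ ·)).erase x) : Multiset ℤ)
        = ↑(y :: ((s.sort (· ≤ ·)).erase x)) :=
      Multiset.coe_eq_coe.2 (List.perm_orderedInsert _ _ _)
    rw [h1, ← Multiset.cons_coe, ← Multiset.coe_erase, Multiset.sort_eq,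
      add_comm, Multiset.singleton_add]
  rw [hkey]
  exact forall₂_erase_insert (Multiset.pairwise_sort _ _) hxl hxy
-- ===== Layer 1 : segment-level auxiliary lemmas =====

lemma seg_ext {x y : Seg} (h1 : segA x = segA y) (h2 : segB x = segB y) : x = y :=
  Subtype.ext (Prod.ext h1 h2)

lemma segA_le_segB (D : Seg) : segA D ≤ segB D := D.2

@[simp] lemma segA_mk (a b : ℤ) (hab : a ≤ b) : segA (Seg.mk a b hab) = a := rfl
@[simp] lemma segB_mk (a b : ℤ) (hab : a ≤ b) : segB (Seg.mk a b hab) = b := rfl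

lemma seg_le_iff {x y : Seg} :
    x ≤ y ↔ segA x < segA y ∨ (segA x = segA y ∧ segB x ≤ segB y) := by
  show toLex x.val ≤ toLex y.val ↔ _
  exact Prod.Lex.le_iff

lemma mem_mkSeg? {E : Seg} {a b' : ℤ} (h : E ∈ mkSeg? a b') : segA E = a := by
  unfold mkSeg? at h
  split at h
  · rw [Multiset.mem_singleton] at h; subst h; rfl
  · simp at h

lemma removalTail_segA (h : Multiset Seg) (b : ℤ) :
    ∀ (fuel : ℕ) (a0 b0 : ℤ) (D : Seg), D ∈ removalTail h b fuel a0 b0 → a0 < segA D := by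
  intro fuel
  induction fuel with
  | zero => intro a0 b0 D hD; simp [removalTail] at hD
  | succ n ih =>
    intro a0 b0 D hD
    rw [removalTail] at hD
    split at hD
    · rename_i hx
      rcases List.mem_cons.1 hD with rfl | hD'
      · exact (Classical.choose_spec hx).1.2.1
      · exact lt_trans (Classical.choose_spec hx).1.2.1 (ih _ _ _ hD')
    · simp at hD

lemma truncList_segA : ∀ (b : ℤ) (L : List Seg) (E : Seg), E ∈ truncList b L →
    segA E = b + 1 ∨ ∃ D ∈ L.tail, segA E = segA D := by
  intro b L
  induction L with
  | nil => intro E hE; simp [truncList] at hE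
  | cons D rest ih =>
    intro E hE
    cases rest with
    | nil => exact Or.inl (mem_mkSeg? (by simpa [truncList] using hE))
    | cons D' rest' =>
      rw [truncList, Multiset.mem_add] at hE
      rcases hE with hE | hE
      · exact Or.inr ⟨D', by simp, mem_mkSeg? hE⟩
      · rcases ih E hE with h | ⟨D'', hD'', hh⟩
        · exact Or.inl h
        · exact Or.inr ⟨D'', List.mem_cons_of_mem _ hD'', hh⟩

/-- existence of a minimal-`b` admissible segment. -/
lemma exists_min_removal {Δ : Seg} {h : Multiset Seg} (hadm : SegAdmissible Δ h) :
    ∃ D, (D ∈ h ∧ segA D = segA Δ ∧ segB Δ ≤ segB D) ∧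
      ∀ D', (D' ∈ h ∧ segA D' = segA Δ ∧ segB Δ ≤ segB D') → segB D ≤ segB D' := by
  obtain ⟨D₀, hD₀, hA₀, hB₀⟩ := hadm
  have hmem : segB D₀ ∈ (h.filter (fun D => segA D = segA Δ)).map segB :=
    Multiset.mem_map_of_mem _ (Multiset.mem_filter.2 ⟨hD₀, hA₀⟩)
  obtain ⟨β, hβ⟩ := gpick_isSome hmem hB₀
  obtain ⟨h1, h2, h3⟩ := gpick_spec hβ
  obtain ⟨D, hD, rfl⟩ := Multiset.mem_map.1 h1
  rw [Multiset.mem_filter] at hD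
  refine ⟨D, ⟨hD.1, hD.2, h2⟩, ?_⟩
  rintro D' ⟨hD', hA', hB'⟩
  exact h3 (segB D') (Multiset.mem_map_of_mem _ (Multiset.mem_filter.2 ⟨hD', hA'⟩)) hB'

lemma removalSeq_spec {Δ : Seg} {h : Multiset Seg} (hadm : SegAdmissible Δ h) :
    (Upsilon Δ h ∈ h ∧ segA (Upsilon Δ h) = segA Δ ∧ segB Δ ≤ segB (Upsilon Δ h)) ∧
    (∀ D' ∈ h, segA D' = segA Δ → segB Δ ≤ segB D' → segB (Upsilon Δ h) ≤ segB D') ∧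
    (∃ tl : List Seg, removalSeq Δ h = Upsilon Δ h :: tl ∧ ∀ D ∈ tl, segA Δ < segA D) := by
  have hx := exists_min_removal hadm
  have hseq : removalSeq Δ h = Classical.choose hx ::
      removalTail h (segB Δ) ((segB (Classical.choose hx) - segB Δ).toNat)
        (segA (Classical.choose hx)) (segB (Classical.choose hx)) := by
    unfold removalSeq
    rw [dif_pos hx]
  have hU : Upsilon Δ h = Classical.choose hx := by rw [Upsilon, hseq]; rfl
  obtain ⟨⟨h1, h2, h3⟩, hmin⟩ := Classical.choose_spec hx
  rw [← hU] at h1 h2 h3 hmin hseq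
  refine ⟨⟨h1, h2, h3⟩, fun D' hD' hA' hB' => hmin D' ⟨hD', hA', hB'⟩, ?_⟩
  refine ⟨_, hseq, ?_⟩
  intro D hD
  have := removalTail_segA h (segB Δ) _ _ _ D hD
  rw [h2] at this
  exact this

lemma segRemove_eq {Δ : Seg} {h h' : Multiset Seg} (hsr : segRemove Δ h = some h') :
    SegAdmissible Δ h ∧
      h' = h - (removalSeq Δ h : Multiset Seg) + truncList (segB Δ) (removalSeq Δ h) := by
  unfold segRemove at hsr
  split at hsr
  · exact ⟨by assumption, (Option.some.injEq _ _ ▸ hsr).symm⟩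
  · simp at hsr

lemma atc_segRemove {Δ : Seg} {c : ℤ} {h h' : Multiset Seg} (hΔ : segA Δ = c)
    (hsr : segRemove Δ h = some h') :
    atc h' c = (atc h c).erase (Upsilon Δ h) := by
  obtain ⟨hadm, rfl⟩ := segRemove_eq hsr
  obtain ⟨⟨hU1, hU2, hU3⟩, hUmin, tl, htl, htlA⟩ := removalSeq_spec hadm
  have hcb : c ≤ segB Δ := hΔ ▸ segA_le_segB Δ
  unfold atc
  rw [Multiset.filter_add, Multiset.filter_sub]
  have htrunc : Multiset.filter (fun D => segA D = c) (truncList (segB Δ) (removalSeq Δ h)) = 0 := by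
    rw [Multiset.filter_eq_nil]
    intro E hE hEc
    rcases truncList_segA _ _ _ hE with hh | ⟨D, hD, hh⟩
    · omega
    · rw [htl] at hD
      have := htlA D hD
      rw [hΔ] at this
      omega
  have hseqf : Multiset.filter (fun D => segA D = c) (removalSeq Δ h : Multiset Seg)
      = {Upsilon Δ h} := by
    rw [htl, ← Multiset.cons_coe, Multiset.filter_cons_of_pos _ (by rw [hU2, hΔ])]
    have : Multiset.filter (fun D => segA D = c) (tl : Multiset Seg) = 0 := by
      rw [Multiset.filter_eq_nil]
      intro E hE hEc
      have := htlA E (by exact_mod_cast hE)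
      rw [hΔ] at this
      omega
    rw [this]
    rfl
  rw [htrunc, hseqf, add_zero, Multiset.sub_singleton]

lemma rList_none : ∀ L : List Seg, rList L none = none := by
  intro L
  induction L with
  | nil => rfl
  | cons Δ rest ih => rw [rList, Option.bind_none]; exact ih

lemma map_segB_erase {s : Multiset Seg} {c : ℤ} (hs : ∀ D ∈ s, segA D = c) {x : Seg}
    (hx : x ∈ s) : (s.erase x).map segB = (s.map segB).erase (segB x) := by
  induction s using Multiset.induction_on with
  | empty => simp at hx
  | cons a t ih =>
    by_cases hxa : x = a
    · subst hxa
      rw [Multiset.erase_cons_head, Multiset.map_cons, Multiset.erase_cons_head]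
    · have hxt : x ∈ t := by
        rcases Multiset.mem_cons.1 hx with hh | hh
        · exact absurd hh hxa
        · exact hh
      have hBne : segB a ≠ segB x := by
        intro hB
        exact hxa (seg_ext (by rw [hs x hx, hs a (Multiset.mem_cons_self _ _)]) hB.symm)
      rw [Multiset.erase_cons_tail _ (fun hh => hxa hh.symm), Multiset.map_cons,
        Multiset.map_cons, Multiset.erase_cons_tail _ hBne,
        ih (fun D hD => hs D (Multiset.mem_cons_of_mem hD)) hxt]

lemma map_segB_sort {m : Multiset Seg} {c : ℤ} (hm : ∀ D ∈ m, segA D = c) :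
    (m.sort (· ≤ ·)).map segB = (m.map segB).sort (· ≤ ·) := by
  refine List.eq_of_perm_of_sorted (r := (· ≤ ·)) ?_ ?_ (Multiset.pairwise_sort _ _)
  · rw [← Multiset.coe_eq_coe, ← Multiset.map_coe, Multiset.sort_eq, Multiset.sort_eq]
  · rw [List.pairwise_map]
    refine List.Pairwise.imp_of_mem ?_ (Multiset.pairwise_sort m (· ≤ ·))
    intro a b ha hb hab
    rw [Multiset.mem_sort] at ha hb
    rcases seg_le_iff.1 hab with hh | hh
    · rw [hm a ha, hm b hb] at hh; omega
    · exact hh.2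

lemma minStart_eq {m : Multiset Seg} {c : ℤ} (hm0 : m ≠ 0) (hm : ∀ D ∈ m, segA D = c) :
    minStart m = c := by
  unfold minStart
  rcases hl : (m.map segA).sort (· ≤ ·) with _ | ⟨a, l'⟩
  · exfalso
    have : (m.map segA) = 0 := by
      rw [← Multiset.sort_eq (m.map segA) (· ≤ ·), hl]; rfl
    exact hm0 (Multiset.map_eq_zero.1 this)
  · have : a ∈ (m.map segA).sort (· ≤ ·) := by rw [hl]; simp
    rw [Multiset.mem_sort, Multiset.mem_map] at this
    obtain ⟨D, hD, rfl⟩ := this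
    exact hm D hD

/-- the main correspondence between `fsList`/`rList` and the integer greedy. -/
lemma fsList_greedy {c : ℤ} : ∀ (L : List Seg) (h h'' : Multiset Seg),
    (∀ Δ ∈ L, segA Δ = c) → rList L (some h) = some h'' →
    ∃ P : List ℤ, greedy (L.map segB) ((atc h c).map segB) = some P ∧
      (fsList L h).map segB = (P : Multiset ℤ) := by
  intro L
  induction L with
  | nil =>
    intro h h'' _ _
    exact ⟨[], rfl, by simp [fsList]⟩
  | cons Δ L' ih =>
    intro h h'' hL hr
    rw [rList, Option.bind_some] at hr
    rcases hsr : segRemove Δ h with _ | h₁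
    · rw [hsr, rList_none] at hr; exact absurd hr (by simp)
    rw [hsr] at hr
    obtain ⟨hadm, -⟩ := segRemove_eq hsr
    obtain ⟨⟨hU1, hU2, hU3⟩, hUmin, -⟩ := removalSeq_spec hadm
    have hΔc : segA Δ = c := hL Δ (by simp)
    have hUc : segA (Upsilon Δ h) = c := by rw [hU2, hΔc]
    -- the pick at this step
    have hUatc : Upsilon Δ h ∈ atc h c := Multiset.mem_filter.2 ⟨hU1, hUc⟩
    have hpick : gpick (segB Δ) ((atc h c).map segB) = some (segB (Upsilon Δ h)) := by
      refine gpick_eq_of (Multiset.mem_map_of_mem _ hUatc) hU3 ?_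
      intro γ hγ htγ
      obtain ⟨D, hD, rfl⟩ := Multiset.mem_map.1 hγ
      have hD' := Multiset.mem_filter.1 hD
      exact hUmin D hD'.1 (by rw [hD'.2, hΔc]) htγ
    have hstate : (atc h₁ c).map segB = ((atc h c).map segB).erase (segB (Upsilon Δ h)) := by
      rw [atc_segRemove hΔc hsr]
      exact map_segB_erase (fun D hD => (Multiset.mem_filter.1 hD).2) hUatc
    obtain ⟨P', hP'g, hP'fs⟩ := ih h₁ h'' (fun D hD => hL D (by simp [hD])) hr
    refine ⟨segB (Upsilon Δ h) :: P', ?_, ?_⟩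
    · rw [List.map_cons, greedy, hpick, Option.bind_some, ← hstate, hP'g]
      rfl
    · rw [fsList, hsr, Multiset.map_cons, hP'fs]
      rfl

lemma fs_eq_fsList {m h : Multiset Seg} {c : ℤ} (hm0 : m ≠ 0) (hm : ∀ D ∈ m, segA D = c)
    (hadm : rM m h ≠ none) : fs m h = fsList (m.sort (· ≤ ·)) h := by
  have h1 : minStart m = c := minStart_eq hm0 hm
  have h2 : atc m c = m := Multiset.filter_eq_self.2 hm
  unfold fs
  rw [if_neg hm0, h1, h2, if_pos hadm]

-- ===== Final assembly =====

lemma forall₂_le_append {a b c d : List ℤ} (h1 : List.Forall₂ (· ≤ ·) a b)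
    (h2 : List.Forall₂ (· ≤ ·) c d) : List.Forall₂ (· ≤ ·) (a ++ c) (b ++ d) := by
  induction h1 with
  | nil => exact h2
  | cons hx _ ih => exact List.Forall₂.cons hx ih

lemma forall₂_le_reverse {l₁ l₂ : List ℤ} (hF : List.Forall₂ (· ≤ ·) l₁ l₂) :
    List.Forall₂ (· ≤ ·) l₁.reverse l₂.reverse := by
  induction hF with
  | nil => exact List.Forall₂.nil
  | cons hx hF' ih =>
    rw [List.reverse_cons, List.reverse_cons]
    exact forall₂_le_append ih (List.Forall₂.cons hx List.Forall₂.nil)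

lemma forall₂_le_getD {l₁ l₂ : List ℤ} (hF : List.Forall₂ (· ≤ ·) l₁ l₂) (i : ℕ)
    (hi : i < l₁.length) : l₁.getD i 0 ≤ l₂.getD i 0 := by
  have hlen := hF.length_eq
  rw [List.getD_eq_getElem _ _ hi, List.getD_eq_getElem _ _ (by omega)]
  have := (List.forall₂_iff_get.1 hF).2 i hi (by omega)
  simpa [List.get_eq_getElem] using this

lemma sort_coe_eq {P : List ℤ} (hP : P.Pairwise (· ≤ ·)) :
    (P : Multiset ℤ).sort (· ≤ ·) = P :=
  List.eq_of_perm_of_sorted (by rw [← Multiset.coe_eq_coe, Multiset.sort_eq])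
    (Multiset.pairwise_sort _ _) hP

/-- replacing one segment of `m₁` (at the point `c`) by a longer
one gives `fs(m₁,h) ≤ᵃ_c fs(m₂,h)`. -/
theorem statement5 (h m₁ : Multiset Seg) (c b₀ b : ℤ) (hc : c ≤ b₀) (hb : b₀ < b)
    (hm₁ : m₁ ≠ 0) (hpt : ∀ Δ ∈ m₁, segA Δ = c)
    (hmem : Seg.mk c b₀ hc ∈ m₁)
    (m₂ : Multiset Seg)
    (hm₂ : m₂ = m₁.erase (Seg.mk c b₀ hc) + {Seg.mk c b (by omega)})
    (hadm₁ : rM m₁ h ≠ none) (hadm₂ : rM m₂ h ≠ none) :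
    leA (fs m₁ h) (fs m₂ h) := by
  have hcb : c ≤ b := by omega
  -- m₂ basic facts
  have hΔb : Seg.mk c b hcb ∈ m₂ := by rw [hm₂]; simp
  have hm₂0 : m₂ ≠ 0 := by
    intro h0
    rw [h0] at hΔb
    simp at hΔb
  have hpt₂ : ∀ Δ ∈ m₂, segA Δ = c := by
    intro Δ hΔ
    rw [hm₂, Multiset.mem_add] at hΔ
    rcases hΔ with hΔ | hΔ
    · exact hpt Δ (Multiset.mem_of_mem_erase hΔ)
    · rw [Multiset.mem_singleton] at hΔ; subst hΔ; rfl
  -- success of the removal processes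
  obtain ⟨w₁, hw₁⟩ := Option.ne_none_iff_exists'.1 hadm₁
  obtain ⟨w₂, hw₂⟩ := Option.ne_none_iff_exists'.1 hadm₂
  rw [rM] at hw₁ hw₂
  have hL₁ : ∀ Δ ∈ m₁.sort (· ≤ ·), segA Δ = c :=
    fun Δ hΔ => hpt Δ ((Multiset.mem_sort _).1 hΔ)
  have hL₂ : ∀ Δ ∈ m₂.sort (· ≤ ·), segA Δ = c :=
    fun Δ hΔ => hpt₂ Δ ((Multiset.mem_sort _).1 hΔ)
  obtain ⟨P₁, hg₁, hfs₁⟩ := fsList_greedy (c := c) (m₁.sort (· ≤ ·)) h w₁ hL₁ hw₁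
  obtain ⟨P₂, hg₂, hfs₂⟩ := fsList_greedy (c := c) (m₂.sort (· ≤ ·)) h w₂ hL₂ hw₂
  rw [map_segB_sort hpt] at hg₁
  rw [map_segB_sort hpt₂] at hg₂
  -- target lists comparison
  have hmapm₂ : m₂.map segB = (m₁.map segB).erase b₀ + {b} := by
    rw [hm₂, Multiset.map_add, Multiset.map_singleton, map_segB_erase hpt hmem]
    rfl
  have hb₀mem : b₀ ∈ m₁.map segB := by
    have := Multiset.mem_map_of_mem segB hmem
    simpa using this
  have hT : List.Forall₂ (· ≤ ·) ((m₁.map segB).sort (· ≤ ·)) ((m₂.map segB).sort (· ≤ ·)) := by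
    rw [hmapm₂]
    exact sort_replace (m₁.map segB) b₀ b hb₀mem (le_of_lt hb)
  -- lower bound c on targets of T₂
  have hτ : ∀ u ∈ (m₂.map segB).sort (· ≤ ·), c ≤ u := by
    intro u hu
    rw [Multiset.mem_sort, Multiset.mem_map] at hu
    obtain ⟨D, hD, rfl⟩ := hu
    rw [← hpt₂ D hD]
    exact segA_le_segB D
  -- core comparison
  have hP : List.Forall₂ (· ≤ ·) P₁ P₂ :=
    greedy_comparison hT (Multiset.pairwise_sort _ _) hτ (fun v _ => le_rfl) hg₁ hg₂
  have hP₁s : P₁.Pairwise (· ≤ ·) := greedy_sorted (Multiset.pairwise_sort _ _) hg₁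
  have hP₂s : P₂.Pairwise (· ≤ ·) := greedy_sorted (Multiset.pairwise_sort _ _) hg₂
  -- identify bDesc with reversed pick lists
  have hfs₁' : fs m₁ h = fsList (m₁.sort (· ≤ ·)) h := fs_eq_fsList hm₁ hpt hadm₁
  have hfs₂' : fs m₂ h = fsList (m₂.sort (· ≤ ·)) h := fs_eq_fsList hm₂0 hpt₂ hadm₂
  have hbd₁ : bDesc (fs m₁ h) = P₁.reverse := by
    rw [bDesc, hfs₁', hfs₁, sort_coe_eq hP₁s]
  have hbd₂ : bDesc (fs m₂ h) = P₂.reverse := by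
    rw [bDesc, hfs₂', hfs₂, sort_coe_eq hP₂s]
  have hPrev : List.Forall₂ (· ≤ ·) P₁.reverse P₂.reverse := forall₂_le_reverse hP
  constructor
  · rw [hbd₁, hbd₂]
    exact le_of_eq hPrev.length_eq
  · intro i hi
    rw [hbd₁] at hi ⊢
    rw [hbd₂]
    exact forall₂_le_getD hPrev i hi
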